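/- Let σ ∈ (0,1) and let λ, μ > 0 and let b be a scalar. Viewing the Balakrishnan formula at the level of scalar symbols, the commutator identity reads: λ^σ b - b μ^σ = (sin(πσ)/π) ∫_0^∞ m^σ (λ+m)^{-1} (λ b - b μ) (μ+m)^{-1} dm; i.e., λ^σ - μ^σ = (sin(πσ)/π)(λ - μ) ∫_0^∞ m^σ (λ+m)^{-1}(μ+m)^{-1} dm for all λ, μ > 0. -/

import Mathlib

open MeasureTheory Real Set

lemma aux_integrable_rpow_exp {s b : ℝ} (hs : -1 < s) (hb : 0 < b) :
    IntegrableOn (fun x : ℝ => x ^ s * Real.exp (-(b * x))) (Ioi 0) := by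
  have h := integrableOn_rpow_mul_exp_neg_mul_rpow hs one_pos hb
  refine h.congr_fun (fun x hx => ?_) measurableSet_Ioi
  beta_reduce
  rw [Real.rpow_one, neg_mul]

-- inner t-integral: ∫⁻ t in Ioi 0, ofReal (exp (-(c*t))) = ofReal c⁻¹
lemma aux_lint_exp {c : ℝ} (hc : 0 < c) :
    ∫⁻ t in Ioi (0:ℝ), ENNReal.ofReal (Real.exp (-(c * t))) = ENNReal.ofReal c⁻¹ := by
  have hint : IntegrableOn (fun t : ℝ => Real.exp (-(c * t))) (Ioi 0) := by
    have := aux_integrable_rpow_exp (s := 0) (by norm_num) hc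
    refine this.congr_fun (fun x hx => ?_) measurableSet_Ioi
    beta_reduce
    rw [Real.rpow_zero, one_mul]
  rw [← ofReal_integral_eq_lintegral_ofReal hint
    (Filter.Eventually.of_forall fun t => (Real.exp_pos _).le)]
  congr 1
  have h := Real.integral_rpow_mul_exp_neg_mul_Ioi (a := 1) (r := c) one_pos hc
  simp only [sub_self, Real.rpow_zero, one_mul, Real.rpow_one] at h
  rw [h, Real.Gamma_one, mul_one, one_div]

-- ∫⁻ m in Ioi 0, ofReal (m^(s-1) * exp(-(t*m))) = ofReal ((1/t)^s * Γ s)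
lemma aux_lint_gamma {s t : ℝ} (hs : 0 < s) (ht : 0 < t) :
    ∫⁻ m in Ioi (0:ℝ), ENNReal.ofReal (m ^ (s - 1) * Real.exp (-(t * m))) =
      ENNReal.ofReal ((1 / t) ^ s * Real.Gamma s) := by
  have hint : IntegrableOn (fun m : ℝ => m ^ (s - 1) * Real.exp (-(t * m))) (Ioi 0) :=
    aux_integrable_rpow_exp (by linarith) ht
  rw [← ofReal_integral_eq_lintegral_ofReal hint ?_]
  · rw [Real.integral_rpow_mul_exp_neg_mul_Ioi hs ht]
  · filter_upwards [ae_restrict_mem measurableSet_Ioi] with m hm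
    exact mul_nonneg (Real.rpow_nonneg hm.le _) (Real.exp_pos _).le

-- the main Frullani-type lintegral
lemma aux_frullani (σ a : ℝ) (hσ0 : 0 < σ) (hσ1 : σ < 1) (ha : 0 < a) :
    ∫⁻ m in Ioi (0:ℝ), ENNReal.ofReal (m ^ (σ - 1) * (a + m)⁻¹) =
      ENNReal.ofReal (a ^ (σ - 1) * (Real.pi / Real.sin (Real.pi * σ))) := by
  have hmeas : Measurable (fun p : ℝ × ℝ =>
      ENNReal.ofReal (p.1 ^ (σ - 1) * Real.exp (-((a + p.1) * p.2)))) := by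
    apply ENNReal.measurable_ofReal.comp
    apply Measurable.mul
    · exact (measurable_fst.pow_const _)
    · exact (((measurable_const.add measurable_fst).mul measurable_snd).neg).exp
  have hswap := lintegral_lintegral_swap (μ := volume.restrict (Ioi (0:ℝ)))
    (ν := volume.restrict (Ioi (0:ℝ)))
    (f := fun m t => ENNReal.ofReal (m ^ (σ - 1) * Real.exp (-((a + m) * t))))
    hmeas.aemeasurable
  have hΓσ : (0:ℝ) < Real.Gamma σ := Real.Gamma_pos_of_pos hσ0
  calc ∫⁻ m in Ioi (0:ℝ), ENNReal.ofReal (m ^ (σ - 1) * (a + m)⁻¹)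
      = ∫⁻ m in Ioi (0:ℝ), ∫⁻ t in Ioi (0:ℝ),
          ENNReal.ofReal (m ^ (σ - 1) * Real.exp (-((a + m) * t))) := by
        refine setLIntegral_congr_fun measurableSet_Ioi (fun m hm => ?_)
        have h1 : ∀ t : ℝ, ENNReal.ofReal (m ^ (σ - 1) * Real.exp (-((a + m) * t))) =
            ENNReal.ofReal (m ^ (σ - 1)) * ENNReal.ofReal (Real.exp (-((a + m) * t))) :=
          fun t => ENNReal.ofReal_mul (Real.rpow_nonneg hm.le _)
        simp_rw [h1]
        rw [lintegral_const_mul' _ _ ENNReal.ofReal_ne_top, aux_lint_exp (add_pos ha hm),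
          ← ENNReal.ofReal_mul (Real.rpow_nonneg hm.le _)]
    _ = ∫⁻ t in Ioi (0:ℝ), ∫⁻ m in Ioi (0:ℝ),
          ENNReal.ofReal (m ^ (σ - 1) * Real.exp (-((a + m) * t))) := hswap
    _ = ∫⁻ t in Ioi (0:ℝ),
          ENNReal.ofReal (Real.Gamma σ * (t ^ ((1 - σ) - 1) * Real.exp (-(a * t)))) := by
        refine setLIntegral_congr_fun measurableSet_Ioi (fun t ht => ?_)
        have h2 : ∀ m : ℝ, ENNReal.ofReal (m ^ (σ - 1) * Real.exp (-((a + m) * t))) =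
            ENNReal.ofReal (Real.exp (-(a * t))) *
              ENNReal.ofReal (m ^ (σ - 1) * Real.exp (-(t * m))) := by
          intro m
          rw [← ENNReal.ofReal_mul (Real.exp_pos _).le]
          congr 1
          rw [show -((a + m) * t) = -(a * t) + -(t * m) by ring, Real.exp_add]
          ring
        simp_rw [h2]
        rw [lintegral_const_mul' _ _ ENNReal.ofReal_ne_top, aux_lint_gamma hσ0 ht,
          ← ENNReal.ofReal_mul (Real.exp_pos _).le]
        congr 1
        rw [one_div, Real.inv_rpow ht.le, ← Real.rpow_neg ht.le,
          show -σ = (1 - σ) - 1 by ring]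
        ring
    _ = ENNReal.ofReal (a ^ (σ - 1) * (Real.pi / Real.sin (Real.pi * σ))) := by
        have h3 : ∀ t : ℝ, ENNReal.ofReal (Real.Gamma σ * (t ^ ((1 - σ) - 1) *
            Real.exp (-(a * t)))) = ENNReal.ofReal (Real.Gamma σ) *
              ENNReal.ofReal (t ^ ((1 - σ) - 1) * Real.exp (-(a * t))) :=
          fun t => ENNReal.ofReal_mul hΓσ.le
        simp_rw [h3]
        rw [lintegral_const_mul' _ _ ENNReal.ofReal_ne_top,
          aux_lint_gamma (by linarith) ha, ← ENNReal.ofReal_mul hΓσ.le]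
        congr 1
        have h4 : (1 / a) ^ (1 - σ) = a ^ (σ - 1) := by
          rw [one_div, Real.inv_rpow ha.le, ← Real.rpow_neg ha.le,
            show -(1 - σ) = σ - 1 by ring]
        rw [h4, show Real.Gamma σ * (a ^ (σ - 1) * Real.Gamma (1 - σ)) =
          a ^ (σ - 1) * (Real.Gamma σ * Real.Gamma (1 - σ)) by ring,
          Real.Gamma_mul_Gamma_one_sub]

lemma aux_I (σ a : ℝ) (hσ0 : 0 < σ) (hσ1 : σ < 1) (ha : 0 < a) :
    IntegrableOn (fun m : ℝ => m ^ (σ - 1) * (a + m)⁻¹) (Ioi 0) ∧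
    ∫ m in Ioi (0:ℝ), m ^ (σ - 1) * (a + m)⁻¹ =
      a ^ (σ - 1) * (Real.pi / Real.sin (Real.pi * σ)) := by
  have hsin : 0 < Real.sin (Real.pi * σ) := by
    apply Real.sin_pos_of_pos_of_lt_pi (by positivity)
    calc Real.pi * σ < Real.pi * 1 := by
          exact mul_lt_mul_of_pos_left hσ1 Real.pi_pos
      _ = Real.pi := mul_one _
  have hmeas : Measurable (fun m : ℝ => m ^ (σ - 1) * (a + m)⁻¹) := by fun_prop
  have hnn : 0 ≤ᵐ[volume.restrict (Ioi (0:ℝ))] fun m : ℝ => m ^ (σ - 1) * (a + m)⁻¹ := by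
    filter_upwards [ae_restrict_mem measurableSet_Ioi] with m hm
    exact mul_nonneg (Real.rpow_nonneg (le_of_lt hm) _)
      (inv_nonneg.2 (by simp only [mem_Ioi] at hm; linarith))
  have hfin : HasFiniteIntegral (fun m : ℝ => m ^ (σ - 1) * (a + m)⁻¹)
      (volume.restrict (Ioi (0:ℝ))) := by
    rw [hasFiniteIntegral_iff_ofReal hnn, aux_frullani σ a hσ0 hσ1 ha]
    exact ENNReal.ofReal_lt_top
  refine ⟨⟨hmeas.aestronglyMeasurable, hfin⟩, ?_⟩
  rw [integral_eq_lintegral_of_nonneg_ae hnn hmeas.aestronglyMeasurable,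
    aux_frullani σ a hσ0 hσ1 ha, ENNReal.toReal_ofReal
      (mul_nonneg (Real.rpow_nonneg ha.le _) (div_nonneg Real.pi_pos.le hsin.le))]



/-- scalar shadow of the Balakrishnan commutator formula: for `σ ∈ (0,1)`
and `λ, μ > 0`,
`λ^σ - μ^σ = (sin(πσ)/π)(λ - μ) ∫_0^∞ m^σ (λ+m)⁻¹(μ+m)⁻¹ dm`. -/
theorem stmt11 (σ lam mu : ℝ) (hσ0 : 0 < σ) (hσ1 : σ < 1)
    (hlam : 0 < lam) (hmu : 0 < mu) :
    lam ^ σ - mu ^ σ = (Real.sin (Real.pi * σ) / Real.pi) * (lam - mu) *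
      ∫ m in Set.Ioi (0 : ℝ), m ^ σ * (lam + m)⁻¹ * (mu + m)⁻¹ := by

  rcases eq_or_ne lam mu with rfl | hne
  · simp
  have hsin : 0 < Real.sin (Real.pi * σ) := by
    apply Real.sin_pos_of_pos_of_lt_pi (by positivity)
    calc Real.pi * σ < Real.pi * 1 := mul_lt_mul_of_pos_left hσ1 Real.pi_pos
      _ = Real.pi := mul_one _
  obtain ⟨hIl, hvl⟩ := aux_I σ lam hσ0 hσ1 hlam
  obtain ⟨hIm, hvm⟩ := aux_I σ mu hσ0 hσ1 hmu
  have hlm : lam - mu ≠ 0 := sub_ne_zero.2 hne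
  have hcongr : ∫ m in Ioi (0:ℝ), m ^ σ * (lam + m)⁻¹ * (mu + m)⁻¹ =
      ∫ m in Ioi (0:ℝ), (lam - mu)⁻¹ * (lam * (m ^ (σ - 1) * (lam + m)⁻¹) -
        mu * (m ^ (σ - 1) * (mu + m)⁻¹)) := by
    refine setIntegral_congr_fun measurableSet_Ioi fun m hm => ?_
    have hm0 : (0:ℝ) < m := hm
    have hσm : m ^ σ = m ^ (σ - 1) * m := by
      rw [Real.rpow_sub hm0, Real.rpow_one]
      field_simp
    rw [hσm]
    have h1 : lam + m ≠ 0 := by positivity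
    have h2 : mu + m ≠ 0 := by positivity
    field_simp
    ring
  rw [hcongr, integral_const_mul, integral_sub (hIl.const_mul lam) (hIm.const_mul mu),
    integral_const_mul, integral_const_mul, hvl, hvm,
    Real.rpow_sub hlam, Real.rpow_sub hmu, Real.rpow_one, Real.rpow_one]
  field_simp
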